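/- Let T : A → A be a weak-local derivation on a C*-algebra A and let a ∈ A be self-adjoint with range projection r(a) ∈ A**. Then (1 − r(a)) T(b) (1 − r(a)) = 0 for every element b of the C*-subalgebra of A generated by a. -/

import Mathlib

open scoped ComplexOrder

variable {A : Type*} [NormedRing A] [StarRing A] [CStarRing A] [CompleteSpace A]
  [NormedAlgebra ℂ A] [StarModule ℂ A]

/-- A state on a C*-algebra: a norm-one positive continuous linear functional. -/
def IsState (φ : A →L[ℂ] ℂ) : Prop :=
  ‖φ‖ = 1 ∧ ∀ a : A, 0 ≤ φ (star a * a)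

/-- A derivation on a C*-algebra: a linear map satisfying the Leibniz rule. -/
def IsDerivation (D : A → A) : Prop :=
  IsLinearMap ℂ D ∧ ∀ a b : A, D (a * b) = D a * b + a * D b

/-- A weak-local derivation: a linear map that agrees with some derivation at each point,
up to each state. -/
def IsWeakLocalDerivation (T : A → A) : Prop :=
  IsLinearMap ℂ T ∧ ∀ (a : A) (φ : A →L[ℂ] ℂ), IsState φ →
    ∃ D : A → A, IsDerivation D ∧ φ (T a) = φ (D a)

variable {H : Type*} [NormedAddCommGroup H] [InnerProductSpace ℂ H] [CompleteSpace H]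

open scoped InnerProductSpace

/-- A normal state on `B(H)` in density-matrix form; the normal states of a von Neumann
algebra `M ⊆ B(H)` are exactly the restrictions to `M` of such functionals. -/
def IsNormalState (φ : (H →L[ℂ] H) → ℂ) : Prop :=
  ∃ ξ : ℕ → H, (∑' n, ‖ξ n‖ ^ 2) = 1 ∧ ∀ x : H →L[ℂ] H, φ x = ∑' n, ⟪ξ n, x (ξ n)⟫_ℂ

/-- `M` is the von Neumann algebra generated by the image of `j`, i.e. the double commutant
of `j(A)`.  Together with an isometric `*`-representation `j`, this realizes the enveloping
von Neumann algebra `A**` of `A`. -/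
def GeneratedBy (M : VonNeumannAlgebra H) (j : A →⋆ₐ[ℂ] (H →L[ℂ] H)) : Prop :=
  ∀ x : H →L[ℂ] H, x ∈ M ↔
    ∀ y : H →L[ℂ] H, (∀ b : A, y * j b = j b * y) → x * y = y * x

/-- The function `z ↦ z / √|z|` is continuous on `ℂ`. -/
lemma continuous_div_sqrt_abs : Continuous (fun z : ℂ => z / (Real.sqrt (‖z‖) : ℂ)) := by
  have hbound : ∀ z : ℂ, ‖z / (Real.sqrt (‖z‖) : ℂ)‖ ≤ Real.sqrt (‖z‖) := by
    intro z
    rcases eq_or_ne z 0 with rfl | hz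
    · simp
    · have habs : 0 < ‖z‖ := norm_pos_iff.mpr hz
      have hs : 0 < Real.sqrt (‖z‖) := Real.sqrt_pos.mpr habs
      rw [norm_div, Complex.norm_real, Real.norm_eq_abs,
        abs_of_nonneg hs.le, div_le_iff₀ hs, Real.mul_self_sqrt habs.le]
  rw [continuous_iff_continuousAt]
  intro z
  rcases eq_or_ne z 0 with rfl | hz
  · have ht : Filter.Tendsto (fun z : ℂ => z / (Real.sqrt (‖z‖) : ℂ))
        (nhds 0) (nhds 0) := by
      refine squeeze_zero_norm hbound ?_
      simpa [Function.comp_def] using (Real.continuous_sqrt.comp (continuous_norm (E := ℂ))).tendsto 0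
    unfold ContinuousAt
    simpa using ht
  · have habs : 0 < ‖z‖ := norm_pos_iff.mpr hz
    have hs : Real.sqrt (‖z‖) ≠ 0 := (Real.sqrt_pos.mpr habs).ne'
    exact ContinuousAt.div continuousAt_id
      ((Complex.continuous_ofReal.comp (Real.continuous_sqrt.comp continuous_norm)).continuousAt)
      (Complex.ofReal_ne_zero.mpr hs)

set_option maxHeartbeats 1600000 in
/-- The main technical lemma, proved in the cleaner context of a `CStarAlgebra` instance. -/
theorem weakLocal_aux {A : Type*} [CStarAlgebra A] {H : Type*} [NormedAddCommGroup H]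
    [InnerProductSpace ℂ H] [CompleteSpace H]
    (T : A → A) (hT : IsWeakLocalDerivation T)
    (j : A →⋆ₐ[ℂ] (H →L[ℂ] H)) (hj : Isometry j) (a : A) (ha : IsSelfAdjoint a)
    (r : H →L[ℂ] H) (hr1 : star r = r) (har : j a * r = j a) :
    ∀ b ∈ StarAlgebra.elemental ℂ a, (1 - r) * j (T b) * (1 - r) = 0 := by
  intro b hb
  by_cases hsp : (0 : ℂ) ∈ spectrum ℂ a
  swap
  · -- `a` is invertible, so `r = 1` and the statement is trivial.
    obtain ⟨u, hu⟩ : IsUnit a := spectrum.zero_notMem_iff ℂ |>.mp hsp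
    have h1 : j (↑u⁻¹) * j a = 1 := by
      rw [← map_mul, ← hu, Units.inv_mul, map_one]
    have hr : r = 1 := by
      calc r = (j ↑u⁻¹ * j a) * r := by rw [h1, one_mul]
      _ = j ↑u⁻¹ * (j a * r) := by rw [mul_assoc]
      _ = j ↑u⁻¹ * j a := by rw [har]
      _ = 1 := h1
    rw [hr, sub_self, zero_mul, zero_mul]
  haveI hna : IsStarNormal a := ha.isStarNormal
  obtain ⟨f, hf⟩ : ∃ f : C(spectrum ℂ a, ℂ), cfcHom hna f = b := by
    refine ⟨(continuousFunctionalCalculus a).symm ⟨b, hb⟩, ?_⟩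
    rw [cfcHom_eq_of_isStarNormal]
    show ((continuousFunctionalCalculus a) ((continuousFunctionalCalculus a).symm ⟨b, hb⟩) : A) = b
    rw [StarAlgEquiv.apply_symm_apply]
  set z0 : spectrum ℂ a := ⟨0, hsp⟩ with hz0
  -- the key vanishing lemma
  have hmem : ∀ u : C(spectrum ℂ a, ℂ), u z0 = 0 → j (cfcHom hna u) * (1 - r) = 0 := by
    set V : Ideal C(spectrum ℂ a, ℂ) :=
      { carrier := {u | j (cfcHom hna u) * (1 - r) = 0}
        add_mem' := by
          intro u v hu hv
          simp only [Set.mem_setOf_eq] at *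
          rw [map_add, map_add, add_mul, hu, hv, add_zero]
        zero_mem' := by
          simp only [Set.mem_setOf_eq, map_zero, zero_mul]
        smul_mem' := by
          intro c u hu
          simp only [Set.mem_setOf_eq, smul_eq_mul] at *
          rw [map_mul, map_mul, mul_assoc, hu, mul_zero] } with hV
    have hVclosed : IsClosed (V : Set C(spectrum ℂ a, ℂ)) := by
      have hc : Continuous fun u : C(spectrum ℂ a, ℂ) => j (cfcHom hna u) * (1 - r) :=
        ((hj.continuous.comp (cfcHom_isClosedEmbedding hna).continuous).mul continuous_const)
      exact isClosed_eq hc continuous_const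
    have hVeq := ContinuousMap.idealOfSet_ofIdeal_isClosed hVclosed
    have hid : (ContinuousMap.id ℂ).restrict (spectrum ℂ a) ∈ V := by
      show j (cfcHom hna _) * (1 - r) = 0
      rw [cfcHom_id hna, mul_sub, mul_one, har, sub_self]
    intro u hu
    have humem : u ∈ ContinuousMap.idealOfSet ℂ (ContinuousMap.setOfIdeal V) := by
      rw [ContinuousMap.mem_idealOfSet]
      intro x hx
      by_cases hx0 : x = z0
      · rw [hx0]; exact hu
      · refine absurd (ContinuousMap.mem_setOfIdeal.mpr ⟨_, hid, ?_⟩) hx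
        show (x : ℂ) ≠ 0
        exact fun h => hx0 (Subtype.ext h)
    rwa [hVeq] at humem
  -- decompose b
  set lam : ℂ := f z0 with hlam
  set g : C(spectrum ℂ a, ℂ) :=
    ContinuousMap.mk (fun x => (f x - lam) / (Real.sqrt (‖f x - lam‖) : ℂ))
      (continuous_div_sqrt_abs.comp (f.continuous.sub continuous_const)) with hgdef
  set h : C(spectrum ℂ a, ℂ) :=
    ContinuousMap.mk (fun x => (Real.sqrt (‖f x - lam‖) : ℂ))
      (Complex.continuous_ofReal.comp (Real.continuous_sqrt.comp
        (continuous_norm.comp (f.continuous.sub continuous_const)))) with hhdef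
  have hg0 : g z0 = 0 := by
    show (f z0 - lam) / _ = 0
    rw [← hlam, sub_self, zero_div]
  have hh0 : h z0 = 0 := by
    show ((Real.sqrt (‖f z0 - lam‖) : ℝ) : ℂ) = 0
    rw [← hlam, sub_self]
    simp
  have hsg0 : (star g) z0 = 0 := by
    rw [ContinuousMap.star_apply, hg0, star_zero]
  set cg : A := cfcHom hna g with hcg
  set ch : A := cfcHom hna h with hch
  have hbdec : b = cg * ch + algebraMap ℂ A lam := by
    have hfactor : f = g * h + algebraMap ℂ C(spectrum ℂ a, ℂ) lam := by
      ext x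
      show f x = (f x - lam) / (Real.sqrt (‖f x - lam‖) : ℂ) *
        (Real.sqrt (‖f x - lam‖) : ℂ) + lam
      rcases eq_or_ne (f x - lam) 0 with hfx | hfx
      · rw [hfx, zero_div, zero_mul, zero_add]
        exact sub_eq_zero.mp hfx
      · rw [div_mul_cancel₀]
        · ring
        · have : 0 < ‖f x - lam‖ := norm_pos_iff.mpr hfx
          exact_mod_cast Complex.ofReal_ne_zero.mpr (Real.sqrt_pos.mpr this).ne'
    rw [← hf, hfactor, map_add, map_mul, AlgHomClass.commutes]
  -- key inner product computation
  have key : ∀ ξ : H, ⟪(1 - r) ξ, j (T b) ((1 - r) ξ)⟫_ℂ = 0 := by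
    intro ξ
    set η : H := (1 - r) ξ with hη
    have hchη : j ch η = 0 := by
      have h2 := hmem h hh0
      show (j ch * (1 - r)) ξ = 0
      rw [h2, ContinuousLinearMap.zero_apply]
    have hsgη : j (star cg) η = 0 := by
      have hsc : star cg = cfcHom hna (star g) := by rw [hcg, ← map_star]
      have h2 := hmem (star g) hsg0
      rw [hsc]
      show (j (cfcHom hna (star g)) * (1 - r)) ξ = 0
      rw [h2, ContinuousLinearMap.zero_apply]
    let jL : A →L[ℂ] (H →L[ℂ] H) := ⟨j.toAlgHom.toLinearMap, hj.continuous⟩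
    let ψ : A →L[ℂ] ℂ := (innerSL ℂ η).comp ((ContinuousLinearMap.apply ℂ H η).comp jL)
    have hψ : ∀ x : A, ψ x = ⟪η, j x η⟫_ℂ := fun x => rfl
    have hψpos : ∀ x : A, ψ (star x * x) = ((‖j x η‖ : ℝ) : ℂ) ^ 2 := by
      intro x
      rw [hψ, map_mul, ContinuousLinearMap.mul_apply, map_star,
        ContinuousLinearMap.star_eq_adjoint, ContinuousLinearMap.adjoint_inner_right,
        inner_self_eq_norm_sq_to_K]
      norm_cast
    have hψT : ψ (T b) = 0 := by
      rcases eq_or_ne ‖ψ‖ 0 with hc | hc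
      · rw [norm_eq_zero.mp hc]; rfl
      · set c : ℂ := ((‖ψ‖⁻¹ : ℝ) : ℂ) with hcdef
        have hcψ : ∀ x : A, (c • ψ) x = c * ψ x := fun x => rfl
        have hφst : IsState (c • ψ) := by
          constructor
          · calc ‖c • ψ‖ = ‖c‖ * ‖ψ‖ := norm_smul c ψ
            _ = 1 := by
              rw [hcdef, Complex.norm_real, Real.norm_eq_abs,
                abs_of_nonneg (inv_nonneg.mpr (norm_nonneg ψ)), inv_mul_cancel₀ hc]
          · intro x
            rw [hcψ, hψpos, hcdef, ← Complex.ofReal_pow, ← Complex.ofReal_mul,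
              Complex.zero_le_real]
            exact mul_nonneg (inv_nonneg.mpr (norm_nonneg ψ)) (sq_nonneg _)
        obtain ⟨D, ⟨hDlin, hDleib⟩, hTD⟩ := hT.2 b (c • ψ) hφst
        have hne : c ≠ 0 := by
          rw [hcdef]
          exact Complex.ofReal_ne_zero.mpr (inv_ne_zero hc)
        have hψTD : ψ (T b) = ψ (D b) := by
          rw [hcψ, hcψ] at hTD
          exact mul_left_cancel₀ hne hTD
        have hD1 : D 1 = 0 := by
          have h1 := hDleib 1 1
          rw [mul_one, mul_one, one_mul] at h1
          exact (left_eq_add.mp h1)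
        have hDb : ψ (D b) = 0 := by
          rw [hbdec, hDlin.map_add, Algebra.algebraMap_eq_smul_one, hDlin.map_smul, hD1,
            smul_zero, add_zero, hDleib, map_add, hψ, hψ]
          have e1 : ⟪η, j (D cg * ch) η⟫_ℂ = 0 := by
            rw [map_mul, ContinuousLinearMap.mul_apply, hchη, map_zero, inner_zero_right]
          have e2 : ⟪η, j (cg * D ch) η⟫_ℂ = 0 := by
            rw [map_mul, ContinuousLinearMap.mul_apply, ← ContinuousLinearMap.adjoint_inner_left,
              ← ContinuousLinearMap.star_eq_adjoint, ← map_star, hsgη, inner_zero_left]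
          rw [e1, e2, add_zero]
        rw [hψTD, hDb]
    rw [← hψ]
    exact hψT
  -- conclude
  have hsa : ContinuousLinearMap.adjoint (1 - r : H →L[ℂ] H) = 1 - r := by
    rw [← ContinuousLinearMap.star_eq_adjoint, star_sub, star_one, hr1]
  have hz : (((1 - r) * j (T b) * (1 - r) : H →L[ℂ] H) : H →ₗ[ℂ] H) = 0 := by
    rw [← inner_map_self_eq_zero]
    intro ξ
    show ⟪((1 - r) * j (T b) * (1 - r)) ξ, ξ⟫_ℂ = 0
    have heq : ((1 - r) * j (T b) * (1 - r)) ξ = (1 - r) (j (T b) ((1 - r) ξ)) := rfl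
    have hadj : ∀ w v : H, ⟪(1 - r) w, v⟫_ℂ = ⟪w, (1 - r) v⟫_ℂ := by
      intro w v
      conv_lhs => rw [← hsa]
      exact ContinuousLinearMap.adjoint_inner_left (1 - r) v w
    rw [heq]
    rw [hadj]
    rw [← inner_conj_symm (𝕜 := ℂ) (j (T b) ((1 - r) ξ)) ((1 - r) ξ)]
    rw [key ξ]
    rw [map_zero]
  ext ξ
  exact LinearMap.ext_iff.mp hz ξ

/-- For a weak-local derivation `T` on `A` and a self-adjoint `a ∈ A` with range projection
`r(a)` in `A**`, one has `(1 - r(a)) T(b) (1 - r(a)) = 0` for every `b` in the C*-subalgebra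
of `A` generated by `a`. -/
theorem weakLocalDerivation_range_proj_bidual (T : A → A) (hT : IsWeakLocalDerivation T)
    (j : A →⋆ₐ[ℂ] (H →L[ℂ] H)) (hj : Isometry j) (M : VonNeumannAlgebra H)
    (hgen : GeneratedBy M j) (a : A) (ha : IsSelfAdjoint a)
    (r : H →L[ℂ] H) (hrM : r ∈ M) (hr1 : star r = r) (hr2 : r * r = r)
    (har : j a * r = j a) (hra : r * j a = j a)
    (hmin : ∀ q : H →L[ℂ] H, q ∈ M → star q = q → q * q = q →
      j a * q = j a → q * j a = j a → r * q = r) :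
    ∀ b ∈ StarAlgebra.elemental ℂ a, (1 - r) * j (T b) * (1 - r) = 0 := by
  letI : CStarAlgebra A :=
    { ‹NormedRing A›, ‹StarRing A›, ‹CStarRing A›, ‹CompleteSpace A›,
      ‹NormedAlgebra ℂ A›, ‹StarModule ℂ A› with }
  exact weakLocal_aux T hT j hj a ha r hr1 har
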